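/- Let ν be a Borel measure on ℝ with ∫_ℝ (|β|² ∧ 1) ν(dβ) < ∞, let a ∈ ℝ and q ≥ 0, and define A(α) = α a + ∫_ℝ (τ(αβ) − α τ(β)) ν(dβ), ζ(α) = ∫_ℝ (|αβ|² ∧ 1) ν(dβ) + α² q, and η(α) = sup_{γ ∈ [−1,1]} |A(αγ)|. Then for every α ≥ 0, η(2α) ≤ 2 η(α) + ζ(α); consequently ζ(2α) + η(2α) ≤ 5 (ζ(α) + η(α)). -/

import Mathlib

open MeasureTheory

/-- The truncation function `τ(α) = α` if `|α| ≤ 1` and `τ(α) = α/|α|` otherwise. -/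
noncomputable def tau (α : ℝ) : ℝ := if |α| ≤ 1 then α else α / |α|

lemma tau_meas : Measurable tau := by
  unfold tau
  exact Measurable.ite (measurableSet_le (measurable_id.abs) measurable_const)
    measurable_id (measurable_id.div measurable_id.abs)

lemma tau_id {x : ℝ} (h : |x| ≤ 1) : tau x = x := if_pos h

lemma abs_tau_le_one (x : ℝ) : |tau x| ≤ 1 := by
  unfold tau; split
  · assumption
  · rcases eq_or_ne x 0 with h | h
    · simp [h]
    · rw [abs_div, abs_abs, div_self (abs_ne_zero.2 h)]

/-- Key pointwise doubling bound. -/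
lemma tau_double (x : ℝ) : |tau (2 * x) - 2 * tau x| ≤ min (|x| ^ 2) 1 := by
  unfold tau
  rcases le_or_gt |2 * x| 1 with h2 | h2
  · have hx : |x| ≤ 1 := by rw [abs_mul] at h2; norm_num at h2 ⊢; linarith [abs_nonneg x]
    rw [if_pos h2, if_pos hx]
    simp only [sub_self, abs_zero]
    exact le_min (by positivity) one_pos.le
  · rw [if_neg (not_le.2 h2)]
    have hxne : x ≠ 0 := by rintro rfl; simp at h2; linarith
    have habs : |x| > 0 := abs_pos.2 hxne
    rcases le_or_gt |x| 1 with hx | hx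
    · rw [if_pos hx]
      have h1 : 2 * x / |2 * x| - 2 * x = x * ((1 - 2 * |x|) / |x|) := by
        rw [abs_mul]; field_simp; ring
      rw [h1, abs_mul, abs_div, abs_abs]
      have h12 : (1:ℝ) / 2 < |x| := by rw [abs_mul] at h2; norm_num at h2; linarith
      have : abs (1 - 2 * |x|) = 2 * |x| - 1 := by
        rw [abs_sub_comm, abs_of_nonneg (by linarith : (0:ℝ) ≤ 2 * |x| - 1)]
      rw [this]
      have hmin : min (|x| ^ 2) 1 = |x| ^ 2 := min_eq_left (by nlinarith)
      rw [hmin, mul_div_assoc', mul_comm, mul_div_assoc, div_self (ne_of_gt habs), mul_one]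
      nlinarith
    · rw [if_neg (not_le.2 hx)]
      have : 2 * x / |2 * x| - 2 * (x / |x|) = -(x / |x|) := by
        rw [abs_mul]; field_simp; ring
      rw [this, abs_neg, abs_div, abs_abs, div_self (ne_of_gt habs)]
      rw [min_eq_right (by nlinarith)]

/-- The integrand of `A` is dominated by a constant times `|β|² ∧ 1`. -/
lemma tau_s_bound (s β : ℝ) :
    |tau (s * β) - s * tau β| ≤ ((1 + |s|) * (max |s| 1) ^ 2) * min (|β| ^ 2) 1 := by
  set M := max |s| 1 with hM
  have hM1 : (1:ℝ) ≤ M := le_max_right _ _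
  have hM0 : (0:ℝ) < M := lt_of_lt_of_le one_pos hM1
  have hsM : |s| ≤ M := le_max_left _ _
  rcases le_or_gt |β| (1 / M) with h | h
  · have hβ1 : |β| ≤ 1 := h.trans (by rw [div_le_one hM0]; exact hM1)
    have hsβ : |s * β| ≤ 1 := by
      rw [abs_mul]
      calc |s| * |β| ≤ M * (1/M) := mul_le_mul hsM h (abs_nonneg β) (le_of_lt hM0)
        _ = 1 := by field_simp
    rw [tau_id hsβ, tau_id hβ1, sub_self, abs_zero]
    have h1 : (0:ℝ) ≤ min (|β|^2) 1 := le_min (by positivity) one_pos.le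
    have h2 : (0:ℝ) ≤ (1 + |s|) * M ^ 2 := by positivity
    exact mul_nonneg h2 h1
  · have hmin : 1 / M ^ 2 ≤ min (|β| ^ 2) 1 := by
      apply le_min
      · rw [div_le_iff₀ (by positivity)]
        have h' : 1 < |β| * M := by rw [div_lt_iff₀ hM0] at h; linarith
        nlinarith [h', abs_nonneg β]
      · rw [div_le_one (by positivity)]; nlinarith
    have hd : |tau (s*β) - s * tau β| ≤ 1 + |s| := by
      calc |tau (s*β) - s * tau β| ≤ |tau (s*β)| + |s * tau β| := abs_sub _ _
        _ ≤ 1 + |s| * 1 := add_le_add (abs_tau_le_one _)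
            (by rw [abs_mul]; exact mul_le_mul_of_nonneg_left (abs_tau_le_one _) (abs_nonneg s))
        _ = 1 + |s| := by ring
    calc |tau (s*β) - s * tau β| ≤ 1 + |s| := hd
      _ = ((1+|s|) * M^2) * (1/M^2) := by field_simp
      _ ≤ ((1+|s|) * M^2) * min (|β|^2) 1 :=
          mul_le_mul_of_nonneg_left hmin (by positivity)

lemma integrable_of_dom (ν : Measure ℝ)
    (hν : ∫⁻ β, ENNReal.ofReal (min (|β| ^ 2) 1) ∂ν < ⊤)
    (f : ℝ → ℝ) (hf : AEStronglyMeasurable f ν) (C : ℝ) (hC : 0 ≤ C)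
    (hb : ∀ β, |f β| ≤ C * min (|β| ^ 2) 1) : Integrable f ν := by
  refine ⟨hf, ?_⟩
  rw [hasFiniteIntegral_iff_norm]
  calc ∫⁻ β, ENNReal.ofReal ‖f β‖ ∂ν
      ≤ ∫⁻ β, ENNReal.ofReal C * ENNReal.ofReal (min (|β| ^ 2) 1) ∂ν := by
        apply lintegral_mono
        intro β
        simp only
        rw [← ENNReal.ofReal_mul hC]
        exact ENNReal.ofReal_le_ofReal (by rw [Real.norm_eq_abs]; exact hb β)
    _ = ENNReal.ofReal C * ∫⁻ β, ENNReal.ofReal (min (|β| ^ 2) 1) ∂ν :=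
        lintegral_const_mul' _ _ ENNReal.ofReal_ne_top
    _ < ⊤ := ENNReal.mul_lt_top ENNReal.ofReal_lt_top hν

lemma abs_int_le (ν : Measure ℝ) (f : ℝ → ℝ) : |∫ β, f β ∂ν| ≤ ∫ β, |f β| ∂ν := by
  simpa [Real.norm_eq_abs] using norm_integral_le_integral_norm (μ := ν) f

lemma min_sq_mono {x y : ℝ} (h : |x| ≤ |y|) : min (|x| ^ 2) 1 ≤ min (|y| ^ 2) 1 :=
  min_le_min (by nlinarith [abs_nonneg x]) le_rfl

lemma min_four (t : ℝ) (_ht : 0 ≤ t) : min (4 * t) 1 ≤ 4 * min t 1 := by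
  rcases le_total t 1 with h | h
  · rw [min_eq_left h]; exact min_le_left _ _
  · rw [min_eq_right h]; exact (min_le_right _ _).trans (by norm_num)

/-- Doubling (Δ₂) estimate: with `A(α) = αa + ∫ (τ(αβ) − ατ(β)) ν(dβ)`,
`ζ(α) = ∫ (|αβ|² ∧ 1) ν(dβ) + α²q` and `η(α) = sup_{|γ|≤1} |A(αγ)|`, one has
`η(2α) ≤ 2η(α) + ζ(α)` and `ζ(2α) + η(2α) ≤ 5(ζ(α) + η(α))` for every `α ≥ 0`. -/
theorem eta_two_mul_le
    (ν : Measure ℝ) (hν : ∫⁻ β, ENNReal.ofReal (min (|β| ^ 2) 1) ∂ν < ⊤)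
    (a : ℝ) (q : ℝ) (hq : 0 ≤ q)
    (A ζ η : ℝ → ℝ)
    (hA : ∀ α, A α = α * a + ∫ β, (tau (α * β) - α * tau β) ∂ν)
    (hζ : ∀ α, ζ α = (∫ β, min (|α * β| ^ 2) 1 ∂ν) + α ^ 2 * q)
    (hη : ∀ α, η α = ⨆ γ : Set.Icc (-1 : ℝ) 1, |A (α * γ)|) :
    ∀ α : ℝ, 0 ≤ α →
      η (2 * α) ≤ 2 * η α + ζ α ∧ ζ (2 * α) + η (2 * α) ≤ 5 * (ζ α + η α) := by
  -- integrability facts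
  have intD : ∀ s : ℝ, Integrable (fun β => tau (s * β) - s * tau β) ν := by
    intro s
    exact integrable_of_dom ν hν _
      (((tau_meas.comp (measurable_const_mul s)).sub (tau_meas.const_mul s)).aestronglyMeasurable)
      _ (by positivity) (tau_s_bound s)
  have intM : ∀ c : ℝ, Integrable (fun β => min (|c * β| ^ 2) 1) ν := by
    intro c
    refine integrable_of_dom ν hν _ ?_ (max (c^2) 1) (le_trans one_pos.le (le_max_right _ _)) ?_
    · exact (((continuous_const.mul continuous_id).abs.pow 2).min continuous_const).aestronglyMeasurable
    · intro β
      have h0 : (0:ℝ) ≤ min (|c * β| ^ 2) 1 := le_min (by positivity) one_pos.le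
      rw [abs_of_nonneg h0]
      rcases le_total (|β|) 1 with h | h
      · calc min (|c * β| ^ 2) 1 ≤ |c * β| ^ 2 := min_le_left _ _
          _ ≤ max (c^2) 1 * |β| ^ 2 := by
              rw [abs_mul, mul_pow, sq_abs, sq_abs]
              exact mul_le_mul_of_nonneg_right (le_max_left _ _) (by positivity)
          _ = max (c^2) 1 * min (|β| ^ 2) 1 := by rw [min_eq_left (by nlinarith [abs_nonneg β])]
      · calc min (|c * β| ^ 2) 1 ≤ 1 := min_le_right _ _
          _ ≤ max (c^2) 1 * 1 := by nlinarith [le_max_right (c^2) 1]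
          _ = max (c^2) 1 * min (|β| ^ 2) 1 := by rw [min_eq_right (by nlinarith [abs_nonneg β])]
  have intMin : Integrable (fun β => min (|β| ^ 2) 1) ν := by
    have := intM 1; simpa using this
  intro α hα
  set I := ∫ β, min (|β| ^ 2) 1 ∂ν with hI
  have hI0 : 0 ≤ I := integral_nonneg fun β => le_min (by positivity) one_pos.le
  -- bounds on |A s|
  have hAb : ∀ c : ℝ, ∀ γ : Set.Icc (-1:ℝ) 1,
      |A (c * γ)| ≤ |c| * |a| + ((1 + |c|) * (max |c| 1) ^ 2) * I := by
    intro c γ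
    have hγ : |(γ:ℝ)| ≤ 1 := abs_le.2 ⟨γ.2.1, γ.2.2⟩
    have hs : |c * (γ:ℝ)| ≤ |c| := by
      rw [abs_mul]
      calc |c| * |(γ:ℝ)| ≤ |c| * 1 := mul_le_mul_of_nonneg_left hγ (abs_nonneg c)
        _ = |c| := mul_one _
    set s : ℝ := c * γ with hsdef
    have hCm : ((1 + |s|) * (max |s| 1) ^ 2) ≤ ((1 + |c|) * (max |c| 1) ^ 2) := by
      have h1 : max |s| 1 ≤ max |c| 1 := max_le_max hs le_rfl
      have h2 : (0:ℝ) < max |s| 1 := lt_of_lt_of_le one_pos (le_max_right _ _)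
      exact mul_le_mul (by linarith) (pow_le_pow_left₀ h2.le h1 2) (by positivity) (by positivity)
    have hint : |∫ β, (tau (s * β) - s * tau β) ∂ν| ≤ ((1 + |c|) * (max |c| 1) ^ 2) * I := by
      calc |∫ β, (tau (s * β) - s * tau β) ∂ν|
          ≤ ∫ β, |tau (s * β) - s * tau β| ∂ν := abs_int_le ν _
        _ ≤ ∫ β, ((1 + |c|) * (max |c| 1) ^ 2) * min (|β| ^ 2) 1 ∂ν := by
            refine integral_mono (intD s).abs (intMin.const_mul _) fun β => ?_
            refine (tau_s_bound s β).trans ?_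
            exact mul_le_mul_of_nonneg_right hCm (le_min (by positivity) one_pos.le)
        _ = ((1 + |c|) * (max |c| 1) ^ 2) * I := integral_const_mul _ _
    rw [hA]
    calc |s * a + ∫ β, (tau (s * β) - s * tau β) ∂ν|
        ≤ |s * a| + |∫ β, (tau (s * β) - s * tau β) ∂ν| := abs_add_le _ _
      _ ≤ |c| * |a| + ((1 + |c|) * (max |c| 1) ^ 2) * I := by
          refine add_le_add ?_ hint
          rw [abs_mul]
          exact mul_le_mul_of_nonneg_right hs (abs_nonneg a)
  have hbdd : ∀ c : ℝ, BddAbove (Set.range fun γ : Set.Icc (-1:ℝ) 1 => |A (c * γ)|) := by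
    intro c
    exact ⟨|c| * |a| + ((1 + |c|) * (max |c| 1) ^ 2) * I, by rintro x ⟨γ, rfl⟩; exact hAb c γ⟩
  have hAle : ∀ (c : ℝ) (γ : Set.Icc (-1:ℝ) 1), |A (c * γ)| ≤ η c := by
    intro c γ
    rw [hη]
    exact le_ciSup (hbdd c) γ
  have hη0 : 0 ≤ η α := le_trans (abs_nonneg _) (hAle α ⟨0, by norm_num⟩)
  -- ζ α nonneg and ∫ min(|αβ|²,1) ≤ ζ α
  have hζint : ∫ β, min (|α * β| ^ 2) 1 ∂ν ≤ ζ α := by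
    rw [hζ]; nlinarith [sq_nonneg α]
  have hζ0 : 0 ≤ ζ α := by
    rw [hζ]
    have := integral_nonneg (μ := ν) (f := fun β => min (|α * β| ^ 2) 1) (fun β => le_min (by positivity : (0:ℝ) ≤ |α * β| ^ 2) one_pos.le)
    nlinarith [sq_nonneg α]
  -- key doubling estimate for A
  have key : ∀ s : ℝ, |s| ≤ α → |A (2 * s)| ≤ 2 * |A s| + ζ α := by
    intro s hs
    have intD2 : Integrable (fun β => tau (2 * (s * β)) - 2 * tau (s * β)) ν := by
      have heq : (fun β => tau (2 * (s * β)) - 2 * tau (s * β))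
          = fun β => (tau (2 * s * β) - 2 * s * tau β) - 2 * (tau (s * β) - s * tau β) := by
        funext β; rw [mul_assoc]; ring
      rw [heq]; exact (intD (2 * s)).sub ((intD s).const_mul 2)
    have hid : A (2 * s) = 2 * A s + ∫ β, (tau (2 * (s * β)) - 2 * tau (s * β)) ∂ν := by
      rw [hA, hA]
      have h1 : (fun β => tau (2 * s * β) - 2 * s * tau β)
          = fun β => (tau (2 * (s * β)) - 2 * tau (s * β)) + 2 * (tau (s * β) - s * tau β) := by
        funext β; rw [mul_assoc]; ring
      rw [h1, integral_add intD2 ((intD s).const_mul 2), integral_const_mul]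
      ring
    have hb : |∫ β, (tau (2 * (s * β)) - 2 * tau (s * β)) ∂ν| ≤ ζ α := by
      refine le_trans ?_ hζint
      calc |∫ β, (tau (2 * (s * β)) - 2 * tau (s * β)) ∂ν|
          ≤ ∫ β, |tau (2 * (s * β)) - 2 * tau (s * β)| ∂ν := abs_int_le ν _
        _ ≤ ∫ β, min (|α * β| ^ 2) 1 ∂ν := by
            refine integral_mono intD2.abs (intM α) fun β => ?_
            refine (tau_double (s * β)).trans (min_sq_mono ?_)
            rw [abs_mul, abs_mul]
            exact mul_le_mul_of_nonneg_right (hs.trans_eq (abs_of_nonneg hα).symm) (abs_nonneg β)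
    calc |A (2 * s)| = |2 * A s + ∫ β, (tau (2 * (s * β)) - 2 * tau (s * β)) ∂ν| := by rw [hid]
      _ ≤ |2 * A s| + |∫ β, (tau (2 * (s * β)) - 2 * tau (s * β)) ∂ν| := abs_add_le _ _
      _ ≤ 2 * |A s| + ζ α := by rw [abs_mul, abs_two]; exact add_le_add le_rfl hb
  haveI : Nonempty (Set.Icc (-1:ℝ) 1) := ⟨⟨0, by norm_num⟩⟩
  have main1 : η (2 * α) ≤ 2 * η α + ζ α := by
    rw [hη]
    apply ciSup_le
    intro γ
    have hγ : |(γ:ℝ)| ≤ 1 := abs_le.2 ⟨γ.2.1, γ.2.2⟩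
    have h2 : (2 * α) * (γ:ℝ) = 2 * (α * γ) := by ring
    rw [h2]
    have hs : |α * (γ:ℝ)| ≤ α := by
      rw [abs_mul, abs_of_nonneg hα]
      calc α * |(γ:ℝ)| ≤ α * 1 := mul_le_mul_of_nonneg_left hγ hα
        _ = α := mul_one _
    calc |A (2 * (α * γ))| ≤ 2 * |A (α * γ)| + ζ α := key (α * γ) hs
      _ ≤ 2 * η α + ζ α := by have := hAle α γ; linarith
  refine ⟨main1, ?_⟩
  have main2 : ζ (2 * α) ≤ 4 * ζ α := by
    rw [hζ, hζ]
    have hpt : ∀ β : ℝ, min (|2 * α * β| ^ 2) 1 ≤ 4 * min (|α * β| ^ 2) 1 := by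
      intro β
      have : |2 * α * β| ^ 2 = 4 * |α * β| ^ 2 := by
        rw [mul_assoc, abs_mul, mul_pow]; norm_num
      rw [this]
      exact min_four _ (by positivity)
    have hint : ∫ β, min (|2 * α * β| ^ 2) 1 ∂ν ≤ ∫ β, 4 * min (|α * β| ^ 2) 1 ∂ν :=
      integral_mono (intM (2 * α)) ((intM α).const_mul 4) hpt
    rw [integral_const_mul] at hint
    have h4 : (2*α)^2*q = 4*(α^2*q) := by ring
    linarith
  linarith
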